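/- arXiv:1501.02320 — 2 statements merged into one kernel-verified Lean document; each statement's English description precedes it below -/
import Mathlib

section
/- Let Θ* ≻ 0 and Θ ≻ 0 be p×p precision matrices, and suppose there exists a pair (i,j), i ≠ j, with Θ*(i,j) ≠ 0 but Θ(i,j) = 0. Then KL(N(0, Θ*⁻¹) || N(0, Θ⁻¹)) ≥ (1/2) log(c_{Θ*}), where c_{Θ*} = min_{(i,j): Θ*(i,j) ≠ 0} Θ*(i,i)Θ*(j,j)/(Θ*(i,i)Θ*(j,j) − Θ*(i,j)²). -/
open Matrix
open scoped MatrixOrder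

lemma my_trace_eq_sum {n : Type*} [Fintype n] [DecidableEq n] {A : Matrix n n ℝ}
    (hA : A.IsHermitian) : A.trace = ∑ k, hA.eigenvalues k := by
  rw [hA.trace_eq_sum_eigenvalues]
  simp

lemma my_posDef_conj {n : Type*} [Fintype n] [DecidableEq n] {A B : Matrix n n ℝ}
    (hA : A.PosDef) (hB : IsUnit B) : (Bᴴ * A * B).PosDef := by
  refine Matrix.PosDef.of_dotProduct_mulVec_pos (Matrix.isHermitian_conjTranspose_mul_mul B hA.1) fun x hx => ?_
  have hBx : B *ᵥ x ≠ 0 := by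
    intro h
    exact hx ((Matrix.mulVec_injective_iff_isUnit.mpr hB) (by simp [h]))
  have h2 := hA.dotProduct_mulVec_pos hBx
  calc (0:ℝ) < star (B *ᵥ x) ⬝ᵥ (A *ᵥ (B *ᵥ x)) := h2
    _ = star x ⬝ᵥ ((Bᴴ * A * B) *ᵥ x) := by
        rw [star_mulVec, ← Matrix.dotProduct_mulVec]
        simp [Matrix.mulVec_mulVec, Matrix.mul_assoc]

lemma my_trace_ge {n : Type*} [Fintype n] [DecidableEq n] {A B : Matrix n n ℝ}
    (hA : A.PosDef) (hB : B.PosDef) :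
    (Fintype.card n : ℝ) + Real.log (A.det * B.det) ≤ (A * B).trace := by
  set S := CFC.sqrt B with hSdef
  have hSps : S.PosSemidef := (CFC.sqrt_nonneg B).posSemidef
  have hSS : S * S = B := CFC.sqrt_mul_sqrt_self B hB.posSemidef.nonneg
  have hdS : S.det * S.det = B.det := by rw [← Matrix.det_mul, hSS]
  have hSunit : IsUnit S := by
    apply (Matrix.isUnit_iff_isUnit_det S).mpr
    apply isUnit_iff_ne_zero.mpr
    intro h
    rw [h, zero_mul] at hdS
    exact hB.det_pos.ne' hdS.symm
  have hSH : Sᴴ = S := hSps.1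
  have hC : (Sᴴ * A * S).PosDef := my_posDef_conj hA hSunit
  set C := Sᴴ * A * S with hCdef
  have htr : C.trace = (A * B).trace := by
    rw [hCdef, hSH, Matrix.trace_mul_cycle, hSS, Matrix.trace_mul_comm]
  have hdet : C.det = A.det * B.det := by
    rw [hCdef, Matrix.det_mul, Matrix.det_mul, hSH]
    rw [← hdS]; ring
  have heig : ∀ k, 0 < hC.1.eigenvalues k := hC.eigenvalues_pos
  have hsum : C.trace = ∑ k, hC.1.eigenvalues k := my_trace_eq_sum hC.1
  have hprod : C.det = ∏ k, hC.1.eigenvalues k := by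
    have := hC.1.det_eq_prod_eigenvalues
    simpa using this
  have hlog : Real.log C.det = ∑ k, Real.log (hC.1.eigenvalues k) := by
    rw [hprod, Real.log_prod]
    exact fun k _ => (heig k).ne'
  have hbound : ∀ k ∈ Finset.univ, 1 + Real.log (hC.1.eigenvalues k) ≤ hC.1.eigenvalues k := by
    intro k _
    have := Real.log_le_sub_one_of_pos (heig k)
    linarith
  have := Finset.sum_le_sum hbound
  rw [Finset.sum_add_distrib, Finset.sum_const, Finset.card_univ, nsmul_eq_mul, mul_one] at this
  rw [← hdet, hlog, ← htr, hsum]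
  linarith

lemma my_sym {n : Type*} {M : Matrix n n ℝ} (hM : M.IsHermitian) (a b : n) :
    M a b = M b a := by
  have := congrFun (congrFun hM b) a
  simpa using this

lemma my_diag_pos {n : Type*} [Fintype n] [DecidableEq n] {M : Matrix n n ℝ}
    (hM : M.PosDef) (a : n) : 0 < M a a := by
  have := hM.dotProduct_mulVec_pos (x := Pi.single a 1) (by
    intro h
    have := congrFun h a
    simp at this)
  simpa [Matrix.mulVec_single, single_dotProduct] using this

lemma my_minor_pos {n : Type*} [Fintype n] [DecidableEq n] {M : Matrix n n ℝ}
    (hM : M.PosDef) {a b : n} (hab : a ≠ b) :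
    0 < M a a * M b b - M a b ^ 2 := by
  have hbb := my_diag_pos hM b
  have hsym := my_sym hM.1 a b
  set x : n → ℝ := Pi.single a (M b b) + Pi.single b (-(M a b)) with hx
  have hxne : x ≠ 0 := by
    intro h
    have := congrFun h a
    simp [hx, Pi.single_apply, hab, (Ne.symm hab)] at this
    exact hbb.ne' this
  have hq := hM.dotProduct_mulVec_pos hxne
  have hval : star x ⬝ᵥ (M *ᵥ x) =
      M b b * (M a a * M b b - M a b ^ 2) := by
    simp [hx, Matrix.mulVec_add, Matrix.mulVec_single, add_dotProduct,
      dotProduct_add, single_dotProduct, Pi.add_apply, hsym]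
    ring
  rw [hval] at hq
  nlinarith

private lemma aux_posdef {p : ℕ} (Θstar : Matrix (Fin p) (Fin p) ℝ) (hstar : Θstar.PosDef)
    (i j : Fin p) (hij : i ≠ j)
    (Sg : Matrix (Fin p) (Fin p) ℝ) (hSg : Sg.PosDef)
    (hinv1 : Sg * Θstar = 1)
    (a b c d : ℝ) (hadef : a = Θstar i i) (hbdef : b = Θstar j j) (hcdef : c = Θstar i j)
    (hddef : d = a * b - c ^ 2)
    (ha : 0 < a) (hb : 0 < b) (hd : 0 < d)
    (N : Matrix (Fin p) (Fin p) ℝ)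
    (hquad : ∀ x : Fin p → ℝ, x ⬝ᵥ (N *ᵥ x) = x ⬝ᵥ (Sg *ᵥ x) + (c/d) * (2 * (x i * x j)))
    (x : Fin p → ℝ) (hx : x ≠ 0) :
    0 < star x ⬝ᵥ (N *ᵥ x) := by
  rw [star_trivial, hquad]
  set s := x i with hsdef
  set t := x j with htdef
  set Q := x ⬝ᵥ (Sg *ᵥ x) with hQdef
  -- the two auxiliary vectors
  set u : Fin p → ℝ := Θstar *ᵥ Pi.single i 1 with hudef
  set v : Fin p → ℝ := Θstar *ᵥ Pi.single j 1 with hvdef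
  have hSgu : Sg *ᵥ u = Pi.single i 1 := by
    rw [hudef, Matrix.mulVec_mulVec, hinv1, Matrix.one_mulVec]
  have hSgv : Sg *ᵥ v = Pi.single j 1 := by
    rw [hvdef, Matrix.mulVec_mulVec, hinv1, Matrix.one_mulVec]
  have hSgT : Sgᵀ = Sg := hSg.1
  have hsymdot : ∀ y z : Fin p → ℝ, y ⬝ᵥ (Sg *ᵥ z) = (Sg *ᵥ y) ⬝ᵥ z := by
    intro y z
    rw [Matrix.dotProduct_mulVec]
    congr 1
    rw [← Matrix.mulVec_transpose, hSgT]
  have hui : u i = a := by rw [hudef, hadef]; simp [Matrix.mulVec_single]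
  have huj : u j = c := by
    rw [hudef, hcdef]; simp [Matrix.mulVec_single, my_sym hstar.1 i j]
  have hvi : v i = c := by rw [hvdef, hcdef]; simp [Matrix.mulVec_single]
  have hvj : v j = b := by rw [hvdef, hbdef]; simp [Matrix.mulVec_single]
  set α := (b * s - c * t) / d with hαdef
  set β := (a * t - c * s) / d with hβdef
  set w : Fin p → ℝ := x - (α • u + β • v) with hwdef
  have hmv : Sg *ᵥ w = (Sg *ᵥ x) - (α • (Pi.single i 1 : Fin p → ℝ) + β • (Pi.single j 1 : Fin p → ℝ)) := by
    rw [hwdef, Matrix.mulVec_sub, Matrix.mulVec_add, Matrix.mulVec_smul, Matrix.mulVec_smul,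
      hSgu, hSgv]
  have e1 : x ⬝ᵥ (Sg *ᵥ w) = Q - (α * s + β * t) := by
    rw [hmv]
    simp [dotProduct_sub, dotProduct_add, dotProduct_smul,
      dotProduct_single, smul_eq_mul, ← hQdef, ← hsdef, ← htdef]
  have e2 : u ⬝ᵥ (Sg *ᵥ w) = s - (α * a + β * c) := by
    rw [hmv]
    simp only [dotProduct_sub, dotProduct_add, dotProduct_smul,
      dotProduct_single, smul_eq_mul, hui, huj, mul_one]
    rw [hsymdot, hSgu]
    simp [single_dotProduct, ← hsdef]
  have e3 : v ⬝ᵥ (Sg *ᵥ w) = t - (α * c + β * b) := by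
    rw [hmv]
    simp only [dotProduct_sub, dotProduct_add, dotProduct_smul,
      dotProduct_single, smul_eq_mul, hvi, hvj, mul_one]
    rw [hsymdot, hSgv]
    simp [single_dotProduct, ← htdef]
  have key : 0 ≤ Q - (α * s + β * t) - (α * (s - (α * a + β * c)) + β * (t - (α * c + β * b))) := by
    have h0 := hSg.posSemidef.dotProduct_mulVec_nonneg w
    rw [star_trivial] at h0
    calc (0:ℝ) ≤ w ⬝ᵥ (Sg *ᵥ w) := h0
      _ = x ⬝ᵥ (Sg *ᵥ w) - (α * (u ⬝ᵥ (Sg *ᵥ w)) + β * (v ⬝ᵥ (Sg *ᵥ w))) := by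
          rw [hwdef]
          simp [sub_dotProduct, add_dotProduct, smul_dotProduct, smul_eq_mul]
      _ = Q - (α * s + β * t) - (α * (s - (α * a + β * c)) + β * (t - (α * c + β * b))) := by
          rw [e1, e2, e3]
  -- now conclude
  clear_value w s t Q α β
  clear hmv e1 e2 e3 hwdef w
  by_cases hst : s = 0 ∧ t = 0
  · obtain ⟨hs0, ht0⟩ := hst
    have hQpos : 0 < Q := by
      have := hSg.dotProduct_mulVec_pos hx
      rwa [star_trivial, ← hQdef] at this
    rw [hs0, ht0]
    simpa using hQpos
  · have hst2 : 0 < b * s ^ 2 + a * t ^ 2 := by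
      rcases not_and_or.mp hst with hs | ht
      · have : 0 < s ^ 2 := by positivity
        nlinarith [sq_nonneg t]
      · have : 0 < t ^ 2 := by positivity
        nlinarith [sq_nonneg s]
    have hd' : a * b - c ^ 2 ≠ 0 := by rw [← hddef]; exact hd.ne'
    have hval : 2 * α * s + 2 * β * t - (α ^ 2 * a + 2 * α * β * c + β ^ 2 * b)
        = (b * s ^ 2 + a * t ^ 2 - 2 * c * s * t) / d := by
      have hd0 : d ≠ 0 := hd.ne'
      rw [hαdef, hβdef]
      field_simp
      rw [hddef]
      ring
    have hQge : Q ≥ (b * s ^ 2 + a * t ^ 2 - 2 * c * s * t) / d := by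
      rw [← hval]; nlinarith [key]
    have hsplit : (b * s ^ 2 + a * t ^ 2 - 2 * c * s * t) / d + (c / d) * (2 * (s * t))
        = (b * s ^ 2 + a * t ^ 2) / d := by
      field_simp
      ring
    have hfin : 0 < (b * s ^ 2 + a * t ^ 2) / d := div_pos hst2 hd
    linarith

private lemma aux_trace_det {p : ℕ} (Θstar Θ : Matrix (Fin p) (Fin p) ℝ) (hstar : Θstar.PosDef) (hΘ : Θ.PosDef)
    (i j : Fin p) (hij : i ≠ j) (hzero : Θ i j = 0)
    (Sg : Matrix (Fin p) (Fin p) ℝ)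
    (hinv1 : Sg * Θstar = 1)
    (a b c d μ : ℝ) (hadef : a = Θstar i i) (hbdef : b = Θstar j j) (hcdef : c = Θstar i j)
    (hddef : d = a * b - c ^ 2) (hμdef : μ = c / d)
    (hd : 0 < d)
    (K N : Matrix (Fin p) (Fin p) ℝ)
    (hKdef : K = Matrix.single i j (1:ℝ) + Matrix.single j i 1)
    (hNdef : N = Sg + μ • K) :
    ((Θ * N).trace = (Θ * Sg).trace) ∧ (N.det = Sg.det * (a * b / d)) := by
  constructor
  · have htr1 : (Θ * Matrix.single i j (1:ℝ)).trace = Θ j i := by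
      rw [Matrix.trace]
      rw [Finset.sum_eq_single j (fun k _ hk => by
        simp [Matrix.diag, hk]) (by simp)]
      simp [Matrix.diag]
    have htr2 : (Θ * Matrix.single j i (1:ℝ)).trace = Θ i j := by
      rw [Matrix.trace]
      rw [Finset.sum_eq_single i (fun k _ hk => by
        simp [Matrix.diag, hk]) (by simp)]
      simp [Matrix.diag]
    have hji : Θ j i = 0 := by rw [← my_sym hΘ.1 i j, hzero]
    rw [hNdef, Matrix.mul_add, Matrix.trace_add, Matrix.mul_smul, Matrix.trace_smul, hKdef,
      Matrix.mul_add, Matrix.trace_add, htr1, htr2, hji, hzero]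
    simp
  · -- determinant
    set U : Matrix (Fin p) (Fin 2) ℝ :=
      Matrix.of (fun k t => μ * (if t = 0 then Θstar k j else Θstar k i)) with hUdef
    set V : Matrix (Fin 2) (Fin p) ℝ :=
      Matrix.of (fun t k => if t = 0 then (Pi.single i 1 : Fin p → ℝ) k else (Pi.single j 1 : Fin p → ℝ) k)
      with hVdef
    have hUV : U * V = Θstar * (μ • K) := by
      have hstd1 : ∀ k l, (Θstar * Matrix.single i j (1:ℝ)) k l
          = if l = j then Θstar k i else 0 := by
        intro k l
        by_cases hl : l = j
        · subst hl; simp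
        · simp [hl]
      have hstd2 : ∀ k l, (Θstar * Matrix.single j i (1:ℝ)) k l
          = if l = i then Θstar k j else 0 := by
        intro k l
        by_cases hl : l = i
        · subst hl; simp
        · simp [hl]
      ext k l
      rw [Matrix.mul_apply, Fin.sum_univ_two]
      rw [Matrix.mul_smul, Matrix.smul_apply, hKdef, Matrix.mul_add, Matrix.add_apply,
        hstd1, hstd2]
      simp [hUdef, hVdef, Matrix.of_apply, Pi.single_apply, smul_eq_mul]
      split_ifs <;> ring
    have hfact : N = Sg * (1 + U * V) := by
      rw [hUV, Matrix.mul_add, Matrix.mul_one, ← Matrix.mul_assoc, hinv1, Matrix.one_mul, hNdef]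
    have hVU : det (1 + V * U) = (1 + μ * c) * (1 + μ * c) - (μ * a) * (μ * b) := by
      have hVU00 : (V * U) 0 0 = μ * c := by
        rw [Matrix.mul_apply]
        rw [Finset.sum_eq_single i (fun k _ hk => by simp [hVdef, Pi.single_apply, hk]) (by simp)]
        simp [hVdef, hUdef, hcdef]
      have hVU01 : (V * U) 0 1 = μ * a := by
        rw [Matrix.mul_apply]
        rw [Finset.sum_eq_single i (fun k _ hk => by simp [hVdef, Pi.single_apply, hk]) (by simp)]
        simp [hVdef, hUdef, hadef]
      have hVU10 : (V * U) 1 0 = μ * b := by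
        rw [Matrix.mul_apply]
        rw [Finset.sum_eq_single j (fun k _ hk => by simp [hVdef, Pi.single_apply, hk]) (by simp)]
        simp [hVdef, hUdef, hbdef]
      have hVU11 : (V * U) 1 1 = μ * c := by
        rw [Matrix.mul_apply]
        rw [Finset.sum_eq_single j (fun k _ hk => by simp [hVdef, Pi.single_apply, hk]) (by simp)]
        simp [hVdef, hUdef, hcdef, my_sym hstar.1 i j]
      rw [Matrix.det_fin_two]
      simp [Matrix.add_apply, Matrix.one_apply, hVU00, hVU01, hVU10, hVU11]
    have hscal : (1 + μ * c) * (1 + μ * c) - (μ * a) * (μ * b) = a * b / d := by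
      have hd' : d ≠ 0 := hd.ne'
      rw [hμdef]
      field_simp
      rw [hddef]
      ring
    rw [hfact, Matrix.det_mul, Matrix.det_one_add_mul_comm, hVU, hscal]


/-- If the graphical model of `Θ` misses an edge `(i,j)` of the graphical model of `Θ*`,
then `KL(N(0,Θ*⁻¹) ‖ N(0,Θ⁻¹)) ≥ ½ log c_{Θ*}`, where the KL divergence between the
zero-mean Gaussians is `½ (tr(Θ Θ*⁻¹) − p + log(det Θ*/det Θ))` and
`c_{Θ*} = min_{(a,b): a≠b, Θ*ₐᵦ≠0} Θ*ₐₐΘ*ᵦᵦ/(Θ*ₐₐΘ*ᵦᵦ − Θ*ₐᵦ²)`. -/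
theorem stmt5 {p : ℕ} (Θstar Θ : Matrix (Fin p) (Fin p) ℝ)
    (hstar : Θstar.PosDef) (hΘ : Θ.PosDef)
    (i j : Fin p) (hij : i ≠ j) (hne : Θstar i j ≠ 0) (hzero : Θ i j = 0) :
    (1 / 2) * ((Θ * Θstar⁻¹).trace - (p : ℝ) + Real.log (Θstar.det / Θ.det)) ≥
      (1 / 2) * Real.log (sInf {r : ℝ | ∃ a b : Fin p, a ≠ b ∧ Θstar a b ≠ 0 ∧
        r = Θstar a a * Θstar b b / (Θstar a a * Θstar b b - (Θstar a b) ^ 2)}) := by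
  have hdetstar : IsUnit Θstar.det := isUnit_iff_ne_zero.mpr hstar.det_pos.ne'
  set S : Set ℝ := {r : ℝ | ∃ a b : Fin p, a ≠ b ∧ Θstar a b ≠ 0 ∧
        r = Θstar a a * Θstar b b / (Θstar a a * Θstar b b - (Θstar a b) ^ 2)} with hSset
  set Sg := Θstar⁻¹ with hSgdef
  have hSg : Sg.PosDef := hstar.inv
  have hinv1 : Sg * Θstar = 1 := Matrix.nonsing_inv_mul _ hdetstar
  obtain ⟨a, hadef⟩ : ∃ x : ℝ, x = Θstar i i := ⟨_, rfl⟩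
  obtain ⟨b, hbdef⟩ : ∃ x : ℝ, x = Θstar j j := ⟨_, rfl⟩
  obtain ⟨c, hcdef⟩ : ∃ x : ℝ, x = Θstar i j := ⟨_, rfl⟩
  obtain ⟨d, hddef⟩ : ∃ x : ℝ, x = a * b - c ^ 2 := ⟨_, rfl⟩
  obtain ⟨μ, hμdef⟩ : ∃ x : ℝ, x = c / d := ⟨_, rfl⟩
  have ha : 0 < a := hadef ▸ my_diag_pos hstar i
  have hb : 0 < b := hbdef ▸ my_diag_pos hstar j
  have hd : 0 < d := by
    rw [hddef, hadef, hbdef, hcdef]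
    exact my_minor_pos hstar hij
  obtain ⟨K, hKdef⟩ : ∃ K : Matrix (Fin p) (Fin p) ℝ,
      K = Matrix.single i j (1:ℝ) + Matrix.single j i 1 := ⟨_, rfl⟩
  obtain ⟨N, hNdef⟩ : ∃ N : Matrix (Fin p) (Fin p) ℝ, N = Sg + μ • K := ⟨_, rfl⟩
  have hKquad : ∀ x : Fin p → ℝ, x ⬝ᵥ (K *ᵥ x) = 2 * (x i * x j) := by
    intro x
    rw [hKdef, Matrix.add_mulVec, dotProduct_add,
      Matrix.single_mulVec, Matrix.single_mulVec]
    rw [dotProduct, dotProduct]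
    rw [Finset.sum_eq_single i (fun k _ hk => by simp [Function.update_apply, hk]) (by simp),
        Finset.sum_eq_single j (fun k _ hk => by simp [Function.update_apply, hk]) (by simp)]
    simp
    ring
  have hquad : ∀ x : Fin p → ℝ,
      x ⬝ᵥ (N *ᵥ x) = x ⬝ᵥ (Sg *ᵥ x) + (c / d) * (2 * (x i * x j)) := by
    intro x
    rw [hNdef, Matrix.add_mulVec, dotProduct_add, Matrix.smul_mulVec,
      dotProduct_smul, hKquad x, smul_eq_mul, hμdef]
  have hKapp : ∀ k l, K k l =
      (if k = i ∧ l = j then (1:ℝ) else 0) + (if k = j ∧ l = i then 1 else 0) := by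
    intro k l
    simp [hKdef, Matrix.single, Matrix.add_apply, eq_comm]
  have hKsym : ∀ k l, K k l = K l k := by
    intro k l
    rw [hKapp, hKapp]
    by_cases hki : k = i <;> by_cases hkj : k = j <;>
      by_cases hli : l = i <;> by_cases hlj : l = j <;> simp_all
  have hNH : N.IsHermitian := by
    ext k l
    simp only [Matrix.conjTranspose_apply, star_trivial, hNdef, Matrix.add_apply,
      Matrix.smul_apply, smul_eq_mul]
    rw [my_sym hSg.1 l k, hKsym l k]
  have hNpd : N.PosDef :=
    Matrix.PosDef.of_dotProduct_mulVec_pos hNH fun x hx => aux_posdef Θstar hstar i j hij Sg hSg hinv1 a b c d hadef hbdef hcdef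
      hddef ha hb hd N hquad x hx
  obtain ⟨htrN, hdetN⟩ := aux_trace_det Θstar Θ hstar hΘ i j hij hzero Sg hinv1 a b c d μ
    hadef hbdef hcdef hddef hμdef hd K N hKdef hNdef
  have hr_pos : 0 < a * b / d := div_pos (mul_pos ha hb) hd
  have hmem : a * b / d ∈ S := by
    rw [hSset]
    exact ⟨i, j, hij, hne, by rw [hddef, hadef, hbdef, hcdef]⟩
  have hlb : ∀ y ∈ S, (1:ℝ) ≤ y := by
    rintro y ⟨a', b', hab', hne', rfl⟩
    have hd' := my_minor_pos hstar hab'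
    rw [le_div_iff₀ hd']
    nlinarith [sq_nonneg (Θstar a' b')]
  have h1 : (1:ℝ) ≤ sInf S := le_csInf ⟨_, hmem⟩ hlb
  have h2 : sInf S ≤ a * b / d := csInf_le ⟨1, hlb⟩ hmem
  have hlog : Real.log (sInf S) ≤ Real.log (a * b / d) :=
    Real.log_le_log (by linarith) h2
  have hmain := my_trace_ge hΘ hNpd
  have e : Real.log (Θ.det * N.det)
      = Real.log Θ.det + Real.log Sg.det + Real.log (a * b / d) := by
    rw [Real.log_mul hΘ.det_pos.ne' hNpd.det_pos.ne', hdetN,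
      Real.log_mul hSg.det_pos.ne' hr_pos.ne']
    ring
  rw [e, htrN, Fintype.card_fin] at hmain
  have hlogSg : Real.log Sg.det + Real.log Θstar.det = 0 := by
    have h4 : Sg.det * Θstar.det = 1 := by
      rw [← Matrix.det_mul, hinv1, Matrix.det_one]
    rw [← Real.log_mul hSg.det_pos.ne' hstar.det_pos.ne', h4, Real.log_one]
  have hlogdiv : Real.log (Θstar.det / Θ.det) = Real.log Θstar.det - Real.log Θ.det :=
    Real.log_div hstar.det_pos.ne' hΘ.det_pos.ne'
  rw [ge_iff_le, hlogdiv]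
  linarith
end

section
/- Suppose Θ* ≻ 0 satisfies Θ*(i,i) ≤ h for all i and |Θ*(i,j)| ≥ α > 0 for all (i,j) with Θ*(i,j) ≠ 0. If Θ ≻ 0 misses at least one edge of Θ*, i.e., there is a pair (i,j), i ≠ j, with Θ*(i,j) ≠ 0 and Θ(i,j) = 0, then KL(N(0,Θ*⁻¹) || N(0,Θ⁻¹)) ≥ (1/2) log(1/(1 − α²/h²)). -/
open Matrix


section aux
variable {p : ℕ}

lemma myConjTransposeEq (C : Matrix (Fin p) (Fin p) ℝ) : Cᴴ = Cᵀ := by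
  ext k l; simp [conjTranspose_apply]

lemma trace_eq_sum_eigs {A : Matrix (Fin p) (Fin p) ℝ} (hA : A.IsHermitian) :
    A.trace = ∑ k, hA.eigenvalues k := by
  simpa using hA.trace_eq_sum_eigenvalues

lemma log_det_le {A : Matrix (Fin p) (Fin p) ℝ} (hA : A.PosDef) :
    Real.log A.det ≤ A.trace - (p : ℝ) := by
  rw [hA.isHermitian.det_eq_prod_eigenvalues, trace_eq_sum_eigs hA.isHermitian]
  rw [Real.log_prod (fun k _ => by exact_mod_cast (hA.eigenvalues_pos k).ne')]
  have hp : (p : ℝ) = ∑ _k : Fin p, (1 : ℝ) := by simp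
  rw [hp, ← Finset.sum_sub_distrib]
  refine Finset.sum_le_sum fun k _ => ?_
  have := Real.log_le_sub_one_of_pos (hA.eigenvalues_pos k)
  norm_cast


lemma posDef_conj {A C : Matrix (Fin p) (Fin p) ℝ} (hA : A.PosDef)
    (hC : Function.Injective (C.mulVec)) (hCsym : Cᵀ = C) : (C * A * C).PosDef := by
  refine Matrix.PosDef.of_dotProduct_mulVec_pos ?_ ?_
  · show (C * A * C)ᴴ = C * A * C
    rw [conjTranspose_mul, conjTranspose_mul, hA.isHermitian.eq, myConjTransposeEq, hCsym,
      Matrix.mul_assoc]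
  · intro x hx
    have hCx : C *ᵥ x ≠ 0 := fun hcx => hx (hC (by simpa using hcx))
    have hstarx : star x = x := by funext k; simp
    have key : star x ⬝ᵥ ((C * A * C) *ᵥ x) = star (C *ᵥ x) ⬝ᵥ (A *ᵥ (C *ᵥ x)) := by
      rw [hstarx, show star (C *ᵥ x) = C *ᵥ x from funext fun k => by simp]
      rw [← Matrix.mulVec_mulVec, ← Matrix.mulVec_mulVec, Matrix.dotProduct_mulVec,
        ← hCsym, Matrix.vecMul_transpose, hCsym]
    rw [key]
    exact hA.dotProduct_mulVec_pos hCx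

open scoped MatrixOrder in
lemma kl_aux {A B : Matrix (Fin p) (Fin p) ℝ} (hA : A.PosDef) (hB : B.PosDef) :
    Real.log (A.det * B.det) ≤ (A * B).trace - (p : ℝ) := by
  set S := CFC.sqrt B with hSdef
  have hSS : S * S = B := CFC.sqrt_mul_sqrt_self B hB.posSemidef.nonneg
  have hSherm : S.IsHermitian := (Matrix.nonneg_iff_posSemidef.mp (CFC.sqrt_nonneg B)).1
  have hSsym : Sᵀ = S := by rw [← myConjTransposeEq]; exact hSherm
  have hdetS : S.det * S.det = B.det := by rw [← Matrix.det_mul, hSS]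
  have hdS : S.det ≠ 0 := by
    intro h0
    rw [h0, mul_zero] at hdetS
    exact hB.det_pos.ne' hdetS.symm
  have hSinj : Function.Injective (S.mulVec) :=
    Matrix.mulVec_injective_iff_isUnit.mpr ((Matrix.isUnit_iff_isUnit_det S).mpr hdS.isUnit)
  have hM : (S * A * S).PosDef := posDef_conj hA hSinj hSsym
  have h1 := log_det_le hM
  have hdet : (S * A * S).det = A.det * B.det := by
    rw [Matrix.det_mul, Matrix.det_mul, ← hdetS]; ring
  have htr : (S * A * S).trace = (A * B).trace := by
    rw [Matrix.trace_mul_cycle, hSS, Matrix.trace_mul_comm]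
  rw [hdet, htr] at h1
  exact h1

lemma diag_pos {M : Matrix (Fin p) (Fin p) ℝ} (hM : M.PosDef) (k : Fin p) : 0 < M k k := by
  have := hM.dotProduct_mulVec_pos (x := Pi.single k 1) (by simp [Function.ne_iff])
  simpa [Matrix.mulVec_single, dotProduct_single] using this


lemma quadForm_pair {M : Matrix (Fin p) (Fin p) ℝ} {i j : Fin p} (hij : i ≠ j) (a b : ℝ) :
    (a • Pi.single (M := fun _ => ℝ) i 1 + b • Pi.single (M := fun _ => ℝ) j 1) ⬝ᵥ
        (M *ᵥ (a • Pi.single (M := fun _ => ℝ) i 1 + b • Pi.single (M := fun _ => ℝ) j 1)) =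
      a ^ 2 * M i i + a * b * (M i j + M j i) + b ^ 2 * M j j := by
  simp [Matrix.mulVec_add, Matrix.mulVec_smul, dotProduct_add, dotProduct_smul,
    Matrix.mulVec_single, smul_dotProduct, dotProduct, Finset.mul_sum,
    Pi.single_apply, mul_ite, ite_mul, Finset.sum_ite_eq', Ne.symm hij,
    Finset.sum_add_distrib, zero_mul, mul_zero, add_mul, mul_add]
  ring


lemma posdef_apply {M : Matrix (Fin p) (Fin p) ℝ} (hM : M.PosDef) {x : Fin p → ℝ} (hx : x ≠ 0) :
    0 < x ⬝ᵥ (M *ᵥ x) := by simpa using hM.dotProduct_mulVec_pos hx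

lemma possemidef_apply {M : Matrix (Fin p) (Fin p) ℝ} (hM : M.PosSemidef) (x : Fin p → ℝ) :
    0 ≤ x ⬝ᵥ (M *ᵥ x) := by simpa using hM.dotProduct_mulVec_nonneg x

end aux

set_option maxHeartbeats 1600000 in
/-- If `Θ* ∈ Ω∞(α,h)` (diagonal entries at most `h`, nonzero entries of magnitude at
least `α > 0`) and `Θ ≻ 0` misses at least one edge of `Θ*`, then
`KL(N(0,Θ*⁻¹) ‖ N(0,Θ⁻¹)) ≥ ½ log(1/(1 − α²/h²))`. -/
theorem stmt6 {p : ℕ} (α h : ℝ) (hα : 0 < α)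
    (Θstar Θ : Matrix (Fin p) (Fin p) ℝ)
    (hstar : Θstar.PosDef) (hΘ : Θ.PosDef)
    (hdiag : ∀ i, Θstar i i ≤ h)
    (hmin : ∀ i j, Θstar i j ≠ 0 → α ≤ |Θstar i j|)
    (i j : Fin p) (hij : i ≠ j) (hne : Θstar i j ≠ 0) (hzero : Θ i j = 0) :
    (1 / 2) * ((Θ * Θstar⁻¹).trace - (p : ℝ) + Real.log (Θstar.det / Θ.det)) ≥
      (1 / 2) * Real.log (1 / (1 - α ^ 2 / h ^ 2)) := by
  classical
  set Sig := Θstar⁻¹ with hSig_def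
  have hSigpd : (Sig).PosDef := hstar.inv
  have hdi : 0 < Θstar i i := diag_pos hstar i
  have hdj : 0 < Θstar j j := diag_pos hstar j
  have hsymst : Θstar j i = Θstar i j := by
    simpa using hstar.isHermitian.apply i j
  have hΘji : Θ j i = 0 := by
    have := hΘ.isHermitian.apply i j
    simp only [star_trivial] at this
    rw [this, hzero]
  have hdetunit : IsUnit Θstar.det := hstar.det_pos.ne'.isUnit
  have hSigThe : Sig * Θstar = 1 := Matrix.nonsing_inv_mul _ hdetunit
  have hTheSig : Θstar * Sig = 1 := Matrix.mul_nonsing_inv _ hdetunit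
  clear_value Sig
  -- positivity of the 2x2 minor
  have hD : 0 < Θstar i i * Θstar j j - Θstar i j ^ 2 := by
    have hvne : (Θstar i j • Pi.single (M := fun _ => ℝ) i 1 +
        (-(Θstar i i)) • Pi.single (M := fun _ => ℝ) j 1) ≠ 0 := by
      intro h0
      have := congrFun h0 j
      simp [Pi.single_apply, Ne.symm hij] at this
      exact hdi.ne' this
    have hq := posdef_apply hstar hvne
    rw [quadForm_pair hij] at hq
    rw [hsymst] at hq
    nlinarith [hq, hdi]
  set D : ℝ := Θstar i i * Θstar j j - Θstar i j ^ 2 with hD_def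
  set lam : ℝ := Θstar i j / D with hlam_def
  clear_value D lam
  set P : Matrix (Fin p) (Fin p) ℝ := Matrix.of fun k l =>
    (if k = i ∧ l = j then lam else 0) + (if k = j ∧ l = i then lam else 0) with hP_def
  clear_value P
  have hPherm : P.IsHermitian := by
    ext k l
    rw [hP_def]
    simp only [Matrix.conjTranspose_apply, Matrix.of_apply, star_trivial]
    by_cases h1 : k = i <;> by_cases h2 : l = j <;> by_cases h3 : k = j <;>
      by_cases h4 : l = i <;> simp_all
  have hPmulVec : ∀ x : Fin p → ℝ, x ⬝ᵥ (P *ᵥ x) = 2 * lam * (x i * x j) := by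
    intro x
    rw [hP_def]
    simp [Matrix.mulVec, dotProduct, Matrix.of_apply, mul_add, add_mul, mul_ite, ite_mul,
      mul_zero, zero_mul, ite_and, Finset.sum_add_distrib, Finset.sum_ite_eq, Finset.sum_ite_eq',
      Finset.mul_sum]
    ring
  set A : Matrix (Fin p) (Fin p) ℝ := Sig + P with hA_def
  clear_value A
  -- A is positive definite
  have hApd : A.PosDef := by
    refine Matrix.PosDef.of_dotProduct_mulVec_pos ?_ ?_
    · rw [hA_def]; exact hSigpd.isHermitian.add hPherm
    · intro x hx
      have hsx : star x = x := funext fun k => by simp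
      rw [hsx]
      set a : ℝ := (Θstar j j * x i - Θstar i j * x j) / D with ha_def
      set b : ℝ := (Θstar i i * x j - Θstar i j * x i) / D with hb_def
      set w : Fin p → ℝ := a • Pi.single (M := fun _ => ℝ) i 1 +
        b • Pi.single (M := fun _ => ℝ) j 1 with hw_def
      clear_value a b
      have hSigsym : (Sig)ᵀ = Sig := by
        rw [← myConjTransposeEq]; exact hSigpd.isHermitian
      have hinv : Sig *ᵥ (Θstar *ᵥ w) = w := by
        rw [Matrix.mulVec_mulVec, hSigThe, Matrix.one_mulVec]
      have hxw : x ⬝ᵥ w = a * x i + b * x j := by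
        rw [hw_def]
        simp [dotProduct_add, dotProduct_smul]
      have hwx : w ⬝ᵥ x = a * x i + b * x j := by
        rw [hw_def]
        simp [add_dotProduct, smul_dotProduct]
      have h2 : (Θstar *ᵥ w) ⬝ᵥ (Sig *ᵥ x) = a * x i + b * x j := by
        rw [Matrix.dotProduct_mulVec, ← Matrix.mulVec_transpose, hSigsym, hinv, hwx]
      have h3 : (Θstar *ᵥ w) ⬝ᵥ w = a ^ 2 * Θstar i i + a * b * (Θstar i j + Θstar j i)
          + b ^ 2 * Θstar j j := by
        rw [dotProduct_comm, hw_def]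
        exact quadForm_pair hij a b
      have key0 : 0 ≤ (x - Θstar *ᵥ w) ⬝ᵥ (Sig *ᵥ (x - Θstar *ᵥ w)) :=
        possemidef_apply hSigpd.posSemidef _
      have hexp : (x - Θstar *ᵥ w) ⬝ᵥ (Sig *ᵥ (x - Θstar *ᵥ w)) =
          x ⬝ᵥ (Sig *ᵥ x) - (a * x i + b * x j) - (a * x i + b * x j)
            + (a ^ 2 * Θstar i i + a * b * (Θstar i j + Θstar j i) + b ^ 2 * Θstar j j) := by
        rw [Matrix.mulVec_sub, hinv, sub_dotProduct, dotProduct_sub,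
          dotProduct_sub, hxw, h2, h3]
        ring
      rw [hexp] at key0
      have hAq : x ⬝ᵥ (A *ᵥ x) = x ⬝ᵥ (Sig *ᵥ x) + 2 * lam * (x i * x j) := by
        rw [hA_def, Matrix.add_mulVec, dotProduct_add, hPmulVec]
      rw [hAq]
      by_cases hxij : x i = 0 ∧ x j = 0
      · have hpos : 0 < x ⬝ᵥ (Sig *ᵥ x) := posdef_apply hSigpd hx
        rw [hxij.1, hxij.2]
        simpa using hpos
      · have halg : 2 * (a * x i + b * x j)
            - (a ^ 2 * Θstar i i + a * b * (Θstar i j + Θstar j i) + b ^ 2 * Θstar j j)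
            + 2 * lam * (x i * x j) = (Θstar j j * (x i) ^ 2 + Θstar i i * (x j) ^ 2) / D := by
          have hDne : Θstar i i * Θstar j j - Θstar i j ^ 2 ≠ 0 := by
            rw [← hD_def]; exact hD.ne'
          rw [ha_def, hb_def, hlam_def, hsymst]
          have hD0 := hD.ne'
          field_simp
          rw [hD_def]
          ring
        have hnum : 0 < Θstar j j * (x i) ^ 2 + Θstar i i * (x j) ^ 2 := by
          rcases not_and_or.mp hxij with hxi | hxi
          · nlinarith [mul_self_pos.mpr hxi, sq_nonneg (x j), hdi, hdj]
          · nlinarith [mul_self_pos.mpr hxi, sq_nonneg (x i), hdi, hdj]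
        have hfrac : 0 < (Θstar j j * (x i) ^ 2 + Θstar i i * (x j) ^ 2) / D :=
          div_pos hnum hD
        linarith [key0, halg, hfrac]
  -- determinant identity
  set U : Matrix (Fin p) (Fin 2) ℝ := Matrix.of fun k m =>
    if m = 0 then lam * Θstar k i else lam * Θstar k j with hU_def
  set V : Matrix (Fin 2) (Fin p) ℝ := Matrix.of fun m l =>
    if m = 0 then (if l = j then (1 : ℝ) else 0) else (if l = i then 1 else 0) with hV_def
  clear_value U V
  have hUV : Θstar * P = U * V := by
    ext k l
    rw [hP_def, hU_def, hV_def]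
    simp [Matrix.mul_apply, Fin.sum_univ_two, Matrix.of_apply, mul_add, mul_ite, mul_zero,
      ite_and, Finset.sum_add_distrib, Finset.sum_ite_eq, Finset.sum_ite_eq']
    split_ifs <;> ring
  have hVU : (1 + V * U).det = (1 + lam * Θstar i j) ^ 2 - lam ^ 2 * (Θstar i i * Θstar j j) := by
    rw [Matrix.det_fin_two]
    have e00 : (V * U) 0 0 = lam * Θstar j i := by
      rw [hV_def, hU_def]
      simp [Matrix.mul_apply, Matrix.of_apply, ite_mul, zero_mul, Finset.sum_ite_eq']
    have e01 : (V * U) 0 1 = lam * Θstar j j := by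
      rw [hV_def, hU_def]
      simp [Matrix.mul_apply, Matrix.of_apply, ite_mul, zero_mul, Finset.sum_ite_eq']
    have e10 : (V * U) 1 0 = lam * Θstar i i := by
      rw [hV_def, hU_def]
      simp [Matrix.mul_apply, Matrix.of_apply, ite_mul, zero_mul, Finset.sum_ite_eq']
    have e11 : (V * U) 1 1 = lam * Θstar i j := by
      rw [hV_def, hU_def]
      simp [Matrix.mul_apply, Matrix.of_apply, ite_mul, zero_mul, Finset.sum_ite_eq']
    simp only [Matrix.add_apply, Matrix.one_apply, e00, e01, e10, e11]
    norm_num [hsymst]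
    ring
  have hdetΘA : Θstar.det * A.det = Θstar i i * Θstar j j / D := by
    have hprod : Θstar * A = 1 + U * V := by
      rw [hA_def, Matrix.mul_add, hTheSig, hUV]
    have : Θstar.det * A.det = ((1 : Matrix (Fin p) (Fin p) ℝ) + U * V).det := by
      rw [← Matrix.det_mul, hprod]
    have hDne : Θstar i i * Θstar j j - Θstar i j ^ 2 ≠ 0 := by
      rw [← hD_def]; exact hD.ne'
    rw [this, Matrix.det_one_add_mul_comm, hVU, hlam_def, hD_def]
    field_simp
    ring
  -- trace identity
  have htrP : (P * Θ).trace = 0 := by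
    have : (P * Θ).trace = lam * Θ j i + lam * Θ i j := by
      rw [hP_def]
      simp [Matrix.trace, Matrix.diag, Matrix.mul_apply, Matrix.of_apply, add_mul, ite_mul,
        zero_mul, ite_and, Finset.sum_add_distrib, Finset.sum_ite_eq, Finset.sum_ite_eq']
    rw [this, hΘji, hzero]
    ring
  have htrA : (A * Θ).trace = (Θ * Sig).trace := by
    rw [hA_def, Matrix.add_mul, Matrix.trace_add, htrP, add_zero, Matrix.trace_mul_comm]
  -- put everything together
  have hkl := kl_aux hApd hΘ
  rw [htrA] at hkl
  have hAdet : 0 < A.det := hApd.det_pos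
  have hΘdet : 0 < Θ.det := hΘ.det_pos
  have hSdet : 0 < Θstar.det := hstar.det_pos
  have hlog1 : Real.log (A.det * Θ.det) = Real.log A.det + Real.log Θ.det :=
    Real.log_mul hAdet.ne' hΘdet.ne'
  have hgoalog : Real.log (Θstar.det / Θ.det) = Real.log Θstar.det - Real.log Θ.det :=
    Real.log_div hSdet.ne' hΘdet.ne'
  have hlogA : Real.log A.det + Real.log Θstar.det
      = Real.log (Θstar i i * Θstar j j / D) := by
    rw [← Real.log_mul hAdet.ne' hSdet.ne', mul_comm, hdetΘA]
  -- numeric comparison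
  have hh : 0 < h := lt_of_lt_of_le hdi (hdiag i)
  have hat : α ^ 2 ≤ Θstar i j ^ 2 := by
    have h1 := hmin i j hne
    have h2 := sq_abs (Θstar i j)
    nlinarith [abs_nonneg (Θstar i j)]
  have htd : Θstar i j ^ 2 < Θstar i i * Θstar j j := by
    have := hD
    rw [hD_def] at this
    linarith
  have hdd : Θstar i i * Θstar j j ≤ h ^ 2 := by nlinarith [hdiag i, hdiag j, hdi, hdj]
  have hα2h2 : α ^ 2 < h ^ 2 := lt_of_le_of_lt hat (lt_of_lt_of_le htd hdd)
  have hden : 0 < 1 - α ^ 2 / h ^ 2 := by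
    rw [sub_pos]
    exact (div_lt_one (by positivity)).mpr hα2h2
  have h1d : 1 / (1 - α ^ 2 / h ^ 2) = h ^ 2 / (h ^ 2 - α ^ 2) := by
    rw [div_eq_div_iff hden.ne' (by nlinarith : h ^ 2 - α ^ 2 ≠ 0)]
    field_simp [hh.ne']
  have hcmp : h ^ 2 / (h ^ 2 - α ^ 2) ≤ Θstar i i * Θstar j j / D := by
    rw [div_le_div_iff₀ (by nlinarith) hD, hD_def]
    nlinarith [mul_le_mul_of_nonneg_right hdd (sq_nonneg α),
      mul_le_mul_of_nonneg_left hat (sq_nonneg h)]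
  have hfin : Real.log (1 / (1 - α ^ 2 / h ^ 2)) ≤ Real.log (Θstar i i * Θstar j j / D) := by
    rw [h1d]
    exact Real.log_le_log (div_pos (by positivity) (by nlinarith)) hcmp
  rw [ge_iff_le, hgoalog]
  linarith [hkl, hlog1, hlogA, hfin]
end
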